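/- Let k be a field of characteristic ≠ 2 with algebraic closure k̄, let a₀, a₁, a₂, a₃ ∈ k[U, V] be homogeneous polynomials of degree 2 with a₀ ≠ 0, and let α ∈ k. Assume a₁² − 4·a₂·a₀ = 4·α·a₃·a₀ in k[U, V], and that there is no homogeneous linear form ℓ ∈ k̄[U, V] such that ℓ² divides the image of a₀ and ℓ divides the image of a₁ in k̄[U, V]. Then there exists β ∈ k such that a₁ = 2β·a₀ and β²·a₀ = a₂ + α·a₃. -/

import Mathlib

open MvPolynomial

namespace BFCD

variable {K : Type*} [Field K]

lemma prime_X0 : Prime (X 0 : MvPolynomial (Fin 2) K) := by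
  rw [← MulEquiv.prime_iff (MvPolynomial.finSuccEquiv K 1).toMulEquiv]
  simpa [MvPolynomial.finSuccEquiv_X_zero] using
    (Polynomial.prime_X (R := MvPolynomial (Fin 1) K))

lemma prime_X1 : Prime (X 1 : MvPolynomial (Fin 2) K) := by
  have h := (MulEquiv.prime_iff (MvPolynomial.renameEquiv K (Equiv.swap (0 : Fin 2) 1)).toMulEquiv
    (p := (X 0 : MvPolynomial (Fin 2) K))).mpr prime_X0
  simpa using h

/-- the shear automorphism `X0 ↦ X0 + r X1`. -/
noncomputable def shear (r : K) : MvPolynomial (Fin 2) K ≃ₐ[K] MvPolynomial (Fin 2) K :=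
  AlgEquiv.ofAlgHom (aeval ![X 0 + C r * X 1, X 1]) (aeval ![X 0 - C r * X 1, X 1])
    (by apply MvPolynomial.algHom_ext; intro i
        fin_cases i <;> simp [algebraMap_eq])
    (by apply MvPolynomial.algHom_ext; intro i
        fin_cases i <;> simp [algebraMap_eq])

lemma prime_monic_linear (r : K) : Prime (X 0 + C r * X 1 : MvPolynomial (Fin 2) K) := by
  have h := (MulEquiv.prime_iff (shear r).toMulEquiv
    (p := (X 0 : MvPolynomial (Fin 2) K))).mpr prime_X0
  simpa [shear] using h

lemma prime_linear (a b : K) (h : a ≠ 0 ∨ b ≠ 0) :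
    Prime (C a * X 0 + C b * X 1 : MvPolynomial (Fin 2) K) := by
  by_cases ha : a = 0
  · subst ha
    have hb : b ≠ 0 := h.resolve_left (fun h => h rfl)
    have : Associated (X 1 : MvPolynomial (Fin 2) K) (C 0 * X 0 + C b * X 1) := by
      refine ⟨⟨C b, C b⁻¹, ?_, ?_⟩, ?_⟩ <;>
        simp [← C_mul, mul_inv_cancel₀ hb, inv_mul_cancel₀ hb, mul_comm]
    exact this.prime prime_X1
  · have : Associated (X 0 + C (b / a) * X 1 : MvPolynomial (Fin 2) K)
        (C a * X 0 + C b * X 1) := by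
      refine ⟨⟨C a, C a⁻¹, by rw [← C_mul, mul_inv_cancel₀ ha, C_1],
        by rw [← C_mul, inv_mul_cancel₀ ha, C_1]⟩, ?_⟩
      show (X 0 + C (b / a) * X 1) * C a = C a * X 0 + C b * X 1
      rw [add_mul, mul_comm (X 0), mul_comm (C (b / a) * X 1), ← mul_assoc,
        ← C_mul, mul_comm a (b / a), div_mul_cancel₀ b ha]
    exact this.prime (prime_monic_linear _)

lemma hom_linear (a b : K) :
    (C a * X 0 + C b * X 1 : MvPolynomial (Fin 2) K).IsHomogeneous 1 := by
  have h1 : (C a * X 0 : MvPolynomial (Fin 2) K).IsHomogeneous 1 := by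
    simpa using (isHomogeneous_C (Fin 2) a).mul (isHomogeneous_X K 0)
  have h2 : (C b * X 1 : MvPolynomial (Fin 2) K).IsHomogeneous 1 := by
    simpa using (isHomogeneous_C (Fin 2) b).mul (isHomogeneous_X K 1)
  exact h1.add h2

lemma fin2_eq (m : Fin 2 →₀ ℕ) :
    m = Finsupp.single 0 (m 0) + Finsupp.single 1 (m 1) := by
  ext i
  fin_cases i <;> simp [Finsupp.single_apply]

lemma fin2_degree (m : Fin 2 →₀ ℕ) : m.degree = m 0 + m 1 := by
  rw [Finsupp.degree_apply, Finset.sum_subset (Finset.subset_univ _)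
    (by intro x _ hx; simpa using Finsupp.notMem_support_iff.mp hx), Fin.sum_univ_two]

lemma rep {p : MvPolynomial (Fin 2) K} (hp : p.IsHomogeneous 2) :
    ∃ a b c : K, p = C a * X 0 ^ 2 + C b * (X 0 * X 1) + C c * X 1 ^ 2 := by
  refine ⟨coeff (Finsupp.single 0 2) p,
    coeff (Finsupp.single 0 1 + Finsupp.single 1 1) p,
    coeff (Finsupp.single 1 2) p, ?_⟩
  have hX01 : (X 0 * X 1 : MvPolynomial (Fin 2) K)
      = monomial (Finsupp.single 0 1 + Finsupp.single 1 1) 1 := by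
    rw [show (X 0 : MvPolynomial (Fin 2) K) = X 0 ^ 1 by ring,
      show (X 1 : MvPolynomial (Fin 2) K) = X 1 ^ 1 by ring,
      X_pow_eq_monomial, X_pow_eq_monomial, monomial_mul, one_mul]
  ext m
  rw [X_pow_eq_monomial, X_pow_eq_monomial, hX01, C_mul_monomial, C_mul_monomial,
    C_mul_monomial, mul_one, mul_one, mul_one, coeff_add, coeff_add,
    coeff_monomial, coeff_monomial, coeff_monomial]
  have key : ∀ d : Fin 2 →₀ ℕ, d = m → coeff m p = coeff d p := fun d hd => by rw [hd]
  by_cases h1 : Finsupp.single (0 : Fin 2) 2 = m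
  · rw [if_pos h1, if_neg, if_neg, ← h1, add_zero, add_zero]
    · intro h; have := DFunLike.congr_fun (h.trans h1.symm) 0; simp [Finsupp.single_apply] at this
    · intro h; have := DFunLike.congr_fun (h.trans h1.symm) 1; simp [Finsupp.single_apply] at this
  by_cases h2 : Finsupp.single (0 : Fin 2) 1 + Finsupp.single 1 1 = m
  · rw [if_neg h1, if_pos h2, if_neg, ← h2, zero_add, add_zero]
    intro h; have := DFunLike.congr_fun (h.trans h2.symm) 0; simp [Finsupp.single_apply] at this
  by_cases h3 : Finsupp.single (1 : Fin 2) 2 = m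
  · rw [if_neg h1, if_neg h2, if_pos h3, ← h3, zero_add, zero_add]
  · rw [if_neg h1, if_neg h2, if_neg h3, add_zero, add_zero]
    refine hp.coeff_eq_zero (fun hdeg => ?_)
    have hsum : m 0 + m 1 = 2 := by rw [← fin2_degree]; exact hdeg
    have hm := fin2_eq m
    have hcases : m 0 = 0 ∧ m 1 = 2 ∨ m 0 = 1 ∧ m 1 = 1 ∨ m 0 = 2 ∧ m 1 = 0 := by omega
    rcases hcases with ⟨e0, e1⟩ | ⟨e0, e1⟩ | ⟨e0, e1⟩ <;> rw [e0, e1] at hm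
    · exact h3 (by simpa using hm.symm)
    · exact h2 hm.symm
    · exact h1 (by simpa using hm.symm)

lemma scale_monomial (c : K) (e : Fin 2 →₀ ℕ) (r : K) :
    aeval (fun i => C c * X i) (monomial e r) = monomial e (c ^ e.degree * r) := by
  rw [aeval_monomial, algebraMap_eq]
  have h1 : (e.prod fun i k => (C c * X i : MvPolynomial (Fin 2) K) ^ k)
      = (e.prod fun i k => (C c : MvPolynomial (Fin 2) K) ^ k)
        * e.prod fun i k => (X i : MvPolynomial (Fin 2) K) ^ k := by
    rw [← Finsupp.prod_mul]
    exact Finsupp.prod_congr fun i _ => mul_pow _ _ _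
  rw [h1]
  have h2 : (e.prod fun i k => (C c : MvPolynomial (Fin 2) K) ^ k)
      = C (c ^ e.degree) := by
    rw [Finsupp.prod, Finset.prod_pow_eq_pow_sum, ← C_pow, Finsupp.degree_apply]
  have h3 : (e.prod fun i k => (X i : MvPolynomial (Fin 2) K) ^ k) = monomial e 1 := by
    rw [Finsupp.prod, prod_X_pow_eq_monomial]
  rw [h2, h3, ← mul_assoc, ← C_mul, C_mul_monomial, mul_one, mul_comm r]

lemma scale_eq_sum (c : K) (p : MvPolynomial (Fin 2) K) :
    aeval (fun i => C c * X i) p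
      = ∑ e ∈ p.support, monomial e (c ^ e.degree * coeff e p) := by
  conv_lhs => rw [← p.support_sum_monomial_coeff]
  rw [map_sum]
  exact Finset.sum_congr rfl fun e _ => scale_monomial c e _

lemma aeval_scale (c : K) {n : ℕ} {p : MvPolynomial (Fin 2) K} (hp : p.IsHomogeneous n) :
    aeval (fun i => C c * X i) p = C (c ^ n) * p := by
  rw [scale_eq_sum]
  conv_rhs => rw [← p.support_sum_monomial_coeff, Finset.mul_sum]
  refine Finset.sum_congr rfl fun e he => ?_
  have hdeg : e.degree = n := by
    have := hp (mem_support_iff.mp he)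
    rw [Finsupp.degree_eq_weight_one]
    exact this
  rw [hdeg, C_mul_monomial]

lemma coeff_scale (c : K) (p : MvPolynomial (Fin 2) K) (d : Fin 2 →₀ ℕ) :
    coeff d (aeval (fun i => C c * X i) p) = c ^ d.degree * coeff d p := by
  rw [scale_eq_sum, coeff_sum]
  simp only [coeff_monomial]
  rw [Finset.sum_ite_eq' p.support d (fun e => c ^ e.degree * coeff e p)]
  by_cases hd : d ∈ p.support
  · rw [if_pos hd]
  · rw [if_neg hd, notMem_support_iff.mp hd, mul_zero]

lemma eq_C_mul_of_dvd [IsAlgClosed K] {p r : MvPolynomial (Fin 2) K} {n : ℕ}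
    (hp : p.IsHomogeneous n) (hr : r.IsHomogeneous n) (hp0 : p ≠ 0) (h : p ∣ r) :
    ∃ γ : K, r = C γ * p := by
  obtain ⟨q, rfl⟩ := h
  refine ⟨coeff 0 q, ?_⟩
  have hq : ∀ c : K, c ≠ 0 → aeval (fun i => C c * X i) q = q := by
    intro c hc
    have h1 : aeval (fun i => C c * X i) (p * q) = C (c ^ n) * (p * q) := aeval_scale c hr
    rw [map_mul, aeval_scale c hp] at h1
    have h2 : (C (c ^ n) * p : MvPolynomial (Fin 2) K) ≠ 0 :=
      mul_ne_zero (fun hC => pow_ne_zero n hc (by rw [← coeff_zero_C (c ^ n), hC, coeff_zero])) hp0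
    exact mul_left_cancel₀ h2 (by rw [h1, mul_assoc])
  have hq0 : ∀ e : Fin 2 →₀ ℕ, e ≠ 0 → coeff e q = 0 := by
    classical
    intro e he
    by_contra hne
    have hm : e.degree ≠ 0 := fun h0 => he ((Finsupp.degree_eq_zero_iff e).mp h0)
    obtain ⟨u, hu⟩ := Infinite.exists_notMem_finset ({0, 1} : Finset K)
    simp only [Finset.mem_insert, Finset.mem_singleton, not_or] at hu
    obtain ⟨c, hcu⟩ := IsAlgClosed.exists_pow_nat_eq u (Nat.pos_of_ne_zero hm)
    have hc : c ≠ 0 := by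
      rintro rfl
      exact hu.1 (by rw [← hcu, zero_pow hm])
    have := congrArg (coeff e) (hq c hc)
    rw [coeff_scale, hcu] at this
    exact hu.2 (mul_right_cancel₀ hne (by rw [this, one_mul]))
  have hqC : q = C (coeff 0 q) := by
    ext e
    by_cases he : e = 0
    · subst he; simp
    · rw [hq0 e he, coeff_C, if_neg (fun h => he h.symm)]
  rw [← hqC, mul_comm]

lemma factor_quadratic [IsAlgClosed K] {p : MvPolynomial (Fin 2) K}
    (hp : p.IsHomogeneous 2) (hp0 : p ≠ 0) :
    ∃ (u : K) (l₁ l₂ : MvPolynomial (Fin 2) K), u ≠ 0 ∧ l₁.IsHomogeneous 1 ∧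
      l₂.IsHomogeneous 1 ∧ Prime l₁ ∧ Prime l₂ ∧ p = C u * (l₁ * l₂) := by
  obtain ⟨a, b, c, hrep⟩ := rep hp
  by_cases ha : a ≠ 0
  · obtain ⟨r, hr⟩ := IsAlgClosed.exists_root
      (Polynomial.C a * Polynomial.X ^ 2 + Polynomial.C b * Polynomial.X + Polynomial.C c)
      (by rw [Polynomial.degree_quadratic ha]; exact two_ne_zero)
    have hroot : a * r ^ 2 + b * r + c = 0 := by
      simpa [Polynomial.IsRoot] using hr
    set s : K := -(b / a) - r with hs
    have h' : a * s = -b - a * r := by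
      rw [hs]; field_simp
    have hb : b = -(a * (r + s)) := by linear_combination h'
    have hc : c = a * (r * s) := by linear_combination hroot - r * h'
    refine ⟨a, C 1 * X 0 + C (-r) * X 1, C 1 * X 0 + C (-s) * X 1, ha,
      hom_linear _ _, hom_linear _ _, prime_linear _ _ (Or.inl one_ne_zero),
      prime_linear _ _ (Or.inl one_ne_zero), ?_⟩
    rw [hrep, hb, hc]
    simp only [map_neg, map_mul, map_add, map_one]
    ring
  · push_neg at ha
    by_cases hc : c ≠ 0
    · refine ⟨c, C (b / c) * X 0 + C 1 * X 1, C 0 * X 0 + C 1 * X 1, hc,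
        hom_linear _ _, hom_linear _ _, prime_linear _ _ (Or.inr one_ne_zero),
        prime_linear _ _ (Or.inr one_ne_zero), ?_⟩
      have hbc : C b = (C c * C (b / c) : MvPolynomial (Fin 2) K) := by
        rw [← C_mul, mul_div_cancel₀ _ hc]
      rw [hrep, ha, hbc]
      simp only [map_zero, map_one]
      ring
    · push_neg at hc
      have hb : b ≠ 0 := by
        rintro rfl
        apply hp0
        rw [hrep, ha, hc]
        simp
      refine ⟨b, C 1 * X 0 + C 0 * X 1, C 0 * X 0 + C 1 * X 1, hb,
        hom_linear _ _, hom_linear _ _, prime_linear _ _ (Or.inl one_ne_zero),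
        prime_linear _ _ (Or.inr one_ne_zero), ?_⟩
      rw [hrep, ha, hc]
      simp only [map_zero, map_one]
      ring

lemma isHomogeneous_map {R S : Type*} [CommSemiring R] [CommSemiring S]
    (f : R →+* S) (_hf : Function.Injective f) {σ : Type*} {p : MvPolynomial σ R} {n : ℕ}
    (h : p.IsHomogeneous n) : (MvPolynomial.map f p).IsHomogeneous n := by
  intro d hd
  apply h
  rw [coeff_map] at hd
  intro h0
  exact hd (by rw [h0, map_zero])

end BFCD

/-- **The key algebraic step in the classification of Type S conic bundles with constant
doubling.** (Kollár–Mella, proof of Proposition 13) -/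
theorem binary_forms_constant_doubling (k : Type*) [Field k] (hk : ringChar k ≠ 2)
    (a₀ a₁ a₂ a₃ : MvPolynomial (Fin 2) k)
    (h₀ : a₀.IsHomogeneous 2) (h₁ : a₁.IsHomogeneous 2)
    (h₂ : a₂.IsHomogeneous 2) (h₃ : a₃.IsHomogeneous 2)
    (ha₀ : a₀ ≠ 0) (α : k)
    (heq : a₁ ^ 2 - 4 * a₂ * a₀ = 4 * C α * a₃ * a₀)
    (hnd : ¬ ∃ ℓ : MvPolynomial (Fin 2) (AlgebraicClosure k),
      ℓ.IsHomogeneous 1 ∧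
      ℓ ^ 2 ∣ MvPolynomial.map (algebraMap k (AlgebraicClosure k)) a₀ ∧
      ℓ ∣ MvPolynomial.map (algebraMap k (AlgebraicClosure k)) a₁) :
    ∃ β : k, a₁ = 2 * C β * a₀ ∧ C β ^ 2 * a₀ = a₂ + C α * a₃ := by
  classical
  have hf : Function.Injective (algebraMap k (AlgebraicClosure k)) :=
    (algebraMap k (AlgebraicClosure k)).injective
  have hA₀ : MvPolynomial.map (algebraMap k (AlgebraicClosure k)) a₀ ≠ 0 := fun h =>
    ha₀ (MvPolynomial.map_injective _ hf (by rw [h, map_zero]))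
  have hA₀hom : (MvPolynomial.map (algebraMap k (AlgebraicClosure k)) a₀).IsHomogeneous 2 :=
    BFCD.isHomogeneous_map _ hf h₀
  have hA₁hom : (MvPolynomial.map (algebraMap k (AlgebraicClosure k)) a₁).IsHomogeneous 2 :=
    BFCD.isHomogeneous_map _ hf h₁
  have heq' : MvPolynomial.map (algebraMap k (AlgebraicClosure k)) a₁ ^ 2 =
      (4 * MvPolynomial.map (algebraMap k (AlgebraicClosure k)) a₂
        + 4 * C (algebraMap k (AlgebraicClosure k) α)
          * MvPolynomial.map (algebraMap k (AlgebraicClosure k)) a₃)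
        * MvPolynomial.map (algebraMap k (AlgebraicClosure k)) a₀ := by
    have h := congrArg (MvPolynomial.map (algebraMap k (AlgebraicClosure k))) heq
    simp only [map_sub, map_mul, map_pow, map_ofNat, MvPolynomial.map_C] at h
    linear_combination h
  have hdvd : MvPolynomial.map (algebraMap k (AlgebraicClosure k)) a₀ ∣
      MvPolynomial.map (algebraMap k (AlgebraicClosure k)) a₁ ^ 2 :=
    ⟨4 * MvPolynomial.map (algebraMap k (AlgebraicClosure k)) a₂
        + 4 * C (algebraMap k (AlgebraicClosure k) α)
          * MvPolynomial.map (algebraMap k (AlgebraicClosure k)) a₃, by rw [heq', mul_comm]⟩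
  obtain ⟨u, l₁, l₂, hu, hl₁h, hl₂h, hl₁p, hl₂p, hfac⟩ := BFCD.factor_quadratic hA₀hom hA₀
  have hl₁A₀ : l₁ ∣ MvPolynomial.map (algebraMap k (AlgebraicClosure k)) a₀ :=
    ⟨C u * l₂, by rw [hfac]; ring⟩
  have hl₁A₁ : l₁ ∣ MvPolynomial.map (algebraMap k (AlgebraicClosure k)) a₁ :=
    hl₁p.dvd_of_dvd_pow (hl₁A₀.trans hdvd)
  by_cases hll : l₁ ∣ l₂
  · exfalso
    obtain ⟨t, ht⟩ := hll
    exact hnd ⟨l₁, hl₁h, ⟨C u * t, by rw [hfac, ht]; ring⟩, hl₁A₁⟩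
  have hl₂A₁ : l₂ ∣ MvPolynomial.map (algebraMap k (AlgebraicClosure k)) a₁ :=
    hl₂p.dvd_of_dvd_pow (dvd_trans
      ⟨C u * l₁, by rw [hfac]; ring⟩ hdvd)
  obtain ⟨t, ht⟩ := hl₁A₁
  have hl₂t : l₂ ∣ t := by
    rcases hl₂p.2.2 l₁ t (ht ▸ hl₂A₁) with h | h
    · exact absurd (hl₂p.irreducible.associated_of_dvd hl₁p.irreducible h).symm.dvd hll
    · exact h
  obtain ⟨v, hv⟩ := hl₂t
  have hA₀A₁ : MvPolynomial.map (algebraMap k (AlgebraicClosure k)) a₀ ∣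
      MvPolynomial.map (algebraMap k (AlgebraicClosure k)) a₁ := by
    refine ⟨C u⁻¹ * v, ?_⟩
    rw [ht, hv, hfac,
      show (C u : MvPolynomial (Fin 2) (AlgebraicClosure k)) * (l₁ * l₂) * (C u⁻¹ * v)
        = (C u * C u⁻¹) * (l₁ * (l₂ * v)) from by ring,
      ← C_mul, mul_inv_cancel₀ hu, C_1, one_mul]
  obtain ⟨γ, hγ⟩ := BFCD.eq_C_mul_of_dvd hA₀hom hA₁hom hA₀ hA₀A₁
  obtain ⟨d, hd⟩ := MvPolynomial.ne_zero_iff.mp ha₀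
  have htwo : (2 : k) ≠ 0 := Ring.two_ne_zero hk
  have hγd : γ = algebraMap k (AlgebraicClosure k) (coeff d a₁ / coeff d a₀) := by
    have h := congrArg (coeff d) hγ
    rw [coeff_C_mul, coeff_map, coeff_map] at h
    have hfd : algebraMap k (AlgebraicClosure k) (coeff d a₀) ≠ 0 :=
      fun h0 => hd (hf (by rw [h0, map_zero]))
    rw [map_div₀, h, mul_div_cancel_right₀ γ hfd]
  have ha₁ : a₁ = C (coeff d a₁ / coeff d a₀) * a₀ := by
    apply MvPolynomial.map_injective _ hf
    rw [map_mul, MvPolynomial.map_C, ← hγd, ← hγ]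
  set β₀ : k := coeff d a₁ / coeff d a₀ with hβ₀
  have h2C : (2 : MvPolynomial (Fin 2) k) * C (β₀ / 2) = C β₀ := by
    rw [show (2 : MvPolynomial (Fin 2) k) = C 2 from (map_ofNat C 2).symm, ← C_mul,
      mul_comm, div_mul_cancel₀ β₀ htwo]
  refine ⟨β₀ / 2, ?_, ?_⟩
  · rw [ha₁, h2C]
  · have heq2 := heq
    rw [ha₁] at heq2
    have key : a₀ * (C β₀ ^ 2 * a₀ - (4 * a₂ + 4 * C α * a₃)) = 0 := by
      linear_combination heq2
    have hE : C β₀ ^ 2 * a₀ = 4 * a₂ + 4 * C α * a₃ :=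
      sub_eq_zero.mp ((mul_eq_zero.mp key).resolve_left ha₀)
    have h4 : (4 : k) ≠ 0 := fun h => htwo (by
      have h22 : (2 : k) * 2 = 0 := by rw [show (2:k)*2 = 4 from by norm_num, h]
      exact mul_self_eq_zero.mp h22)
    have hk4 : (4 : k) * (β₀ / 2) ^ 2 = β₀ ^ 2 := by
      field_simp
      ring
    apply mul_left_cancel₀ (show (C (4:k) : MvPolynomial (Fin 2) k) ≠ 0 from
      fun h => h4 (by rw [← coeff_zero_C (4:k), h, coeff_zero]))
    rw [← mul_assoc, ← C_pow, ← C_mul, hk4, C_pow, hE,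
      show (C (4:k) : MvPolynomial (Fin 2) k) = 4 from map_ofNat C 4]
    ring
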